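/- Let (P(t))_{t≥0} be a Poisson process with rate μ > 0, let Θ > 0, and let S be an exponential random variable with rate λ > 0 independent of P. Then there exist constants c₀ > 0, c₁ > 0, and C₀ > 0 such that for all C ≥ C₀, P( P(S) · (1 + Θ S) ≥ C/2 ) ≤ c₀ (1 + √C) e^{−c₁ √C}. -/

import Mathlib

open MeasureTheory
open scoped NNReal ENNReal

/-- A Poisson process with rate `μ`: a measurable counting process starting at `0`, with
nondecreasing paths, independent increments, and increments over `[s,t]` Poisson
distributed with mean `μ(t−s)`. -/
def IsPoissonProcess {Ω : Type*} [MeasurableSpace Ω] (ℙ : Measure Ω)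
    (P : ℝ → Ω → ℕ) (μ : ℝ) : Prop :=
  (∀ t, Measurable (P t)) ∧
  (∀ᵐ ω ∂ℙ, P 0 ω = 0) ∧
  (∀ᵐ ω ∂ℙ, ∀ s t : ℝ, 0 ≤ s → s ≤ t → P s ω ≤ P t ω) ∧
  (∀ (n : ℕ) (t : Fin (n + 1) → ℝ), 0 ≤ t 0 → Monotone t →
    ProbabilityTheory.iIndepFun
      (fun i : Fin n => fun ω => P (t i.succ) ω - P (t i.castSucc) ω) ℙ) ∧
  (∀ s t : ℝ, 0 ≤ s → s ≤ t →
    Measure.map (fun ω => P t ω - P s ω) ℙ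
      = ProbabilityTheory.poissonMeasure (Real.toNNReal (μ * (t - s))))

lemma pow_self_le_factorial_mul_exp (n : ℕ) : (n : ℝ) ^ n ≤ n.factorial * Real.exp n := by
  induction n with
  | zero => simp
  | succ k ih =>
    rcases Nat.eq_zero_or_pos k with hk | hk
    · subst hk
      norm_num [Nat.factorial]
    · have hk0 : (0:ℝ) < k := by exact_mod_cast hk
      have h3 : (1 + 1/(k:ℝ)) ≤ Real.exp (1/k) := by
        have := Real.add_one_le_exp (1/(k:ℝ)); linarith
      have hpow : ((k:ℝ)+1)^k ≤ (k:ℝ)^k * Real.exp 1 := by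
        have h2 : ((k:ℝ)+1) = k * (1 + 1/k) := by field_simp
        calc ((k:ℝ)+1)^k = (k:ℝ)^k * (1+1/(k:ℝ))^k := by rw [h2, mul_pow]
          _ ≤ (k:ℝ)^k * (Real.exp (1/k))^k := by
              gcongr
          _ = (k:ℝ)^k * Real.exp 1 := by
              rw [← Real.exp_nat_mul]
              congr 1
              field_simp
      have hcast : ((k+1).factorial : ℝ) = ((k:ℝ)+1) * k.factorial := by
        rw [Nat.factorial_succ]; push_cast; ring
      have hexp : Real.exp ((k:ℝ)+1) = Real.exp k * Real.exp 1 := by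
        rw [← Real.exp_add]
      calc ((k+1:ℕ):ℝ)^(k+1) = ((k:ℝ)+1) * ((k:ℝ)+1)^k := by push_cast; ring
        _ ≤ ((k:ℝ)+1) * ((k:ℝ)^k * Real.exp 1) := by
            have h0 : (0:ℝ) ≤ (k:ℝ)+1 := by positivity
            exact mul_le_mul_of_nonneg_left hpow h0
        _ ≤ ((k:ℝ)+1) * ((k.factorial * Real.exp k) * Real.exp 1) := by
            have h0 : (0:ℝ) ≤ (k:ℝ)+1 := by positivity
            exact mul_le_mul_of_nonneg_left
              (mul_le_mul_of_nonneg_right ih (Real.exp_pos 1).le) h0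
        _ = ((k+1).factorial : ℝ) * Real.exp ((k+1:ℕ):ℝ) := by
            rw [hcast]; push_cast [hexp]; ring

lemma poisson_tail_bound (r : ℝ≥0) (x : ℝ) (hx : 1 ≤ x)
    (hr : 2 * Real.exp 1 * (r:ℝ) ≤ x) :
    ProbabilityTheory.poissonMeasure r {n : ℕ | x ≤ (n:ℝ)}
      ≤ ENNReal.ofReal (2 * Real.exp (-(Real.log 2) * x)) := by
  set s : Set ℕ := {n : ℕ | x ≤ (n:ℝ)} with hs
  have hsm : MeasurableSet s := by measurability
  have hmeas_eq : ProbabilityTheory.poissonMeasure r s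
      = ∑' n, s.indicator (⇑(ProbabilityTheory.poissonPMF r)) n := by
    rw [ProbabilityTheory.poissonMeasure, Measure.sum_apply _ hsm]
    congr 1; funext n
    rw [Measure.smul_apply, Measure.dirac_apply' _ hsm, smul_eq_mul]
    by_cases hn : n ∈ s
    · simp [hn, ← ProbabilityTheory.poissonPMFReal_ofReal_eq_poissonPMF,
        ProbabilityTheory.poissonPMFReal]
    · simp [hn]
  rw [hmeas_eq]
  set g : ℕ → ℝ := fun n => if x ≤ (n:ℝ) then (1/2:ℝ)^n else 0 with hg
  have hg_nonneg : ∀ n, 0 ≤ g n := by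
    intro n; simp only [hg]; split <;> positivity
  have hg_le : ∀ n, g n ≤ (1/2:ℝ)^n := by
    intro n; simp only [hg]; split
    · exact le_rfl
    · positivity
  have hg_summable : Summable g :=
    Summable.of_nonneg_of_le hg_nonneg hg_le
      (summable_geometric_of_lt_one (by norm_num) (by norm_num))
  have hpt : ∀ n, s.indicator (⇑(ProbabilityTheory.poissonPMF r)) n ≤ ENNReal.ofReal (g n) := by
    intro n
    by_cases hn : n ∈ s
    · rw [Set.indicator_of_mem hn]
      have hxn : x ≤ (n:ℝ) := hn
      have hn1 : (1:ℝ) ≤ (n:ℝ) := le_trans hx hxn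
      have hn0 : (0:ℝ) < (n:ℝ) := by linarith
      have hpmf : (ProbabilityTheory.poissonPMF r) n
          = ENNReal.ofReal (ProbabilityTheory.poissonPMFReal r n) := rfl
      rw [hpmf]
      apply ENNReal.ofReal_le_ofReal
      have hgn : g n = (1/2:ℝ)^n := by simp only [hg, if_pos hxn]
      rw [hgn, ProbabilityTheory.poissonPMFReal]
      have hfac : (0:ℝ) < n.factorial := by exact_mod_cast n.factorial_pos
      have key : ((r:ℝ))^n / n.factorial ≤ (Real.exp 1 * r / n)^n := by
        rw [div_le_iff₀ hfac, div_pow, div_mul_eq_mul_div, le_div_iff₀ (by positivity)]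
        have h1 : ((n:ℝ))^n ≤ n.factorial * Real.exp n := pow_self_le_factorial_mul_exp n
        calc ((r:ℝ))^n * (n:ℝ)^n ≤ ((r:ℝ))^n * (n.factorial * Real.exp n) := by
              exact mul_le_mul_of_nonneg_left h1 (by positivity)
          _ = (Real.exp 1 * (r:ℝ))^n * n.factorial := by
              rw [mul_pow, ← Real.exp_nat_mul, mul_one]; ring
      have hhalf : Real.exp 1 * (r:ℝ) / n ≤ 1/2 := by
        rw [div_le_iff₀ hn0]
        calc Real.exp 1 * (r:ℝ) ≤ x/2 := by linarith
          _ ≤ 1/2 * n := by linarith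
      calc Real.exp (-(r:ℝ)) * (r:ℝ)^n / n.factorial
          ≤ 1 * ((r:ℝ)^n / n.factorial) := by
            rw [mul_div_assoc]
            exact mul_le_mul_of_nonneg_right (Real.exp_le_one_iff.mpr (neg_nonpos.mpr r.coe_nonneg)) (by positivity)
        _ = (r:ℝ)^n / n.factorial := one_mul _
        _ ≤ (Real.exp 1 * (r:ℝ) / n)^n := key
        _ ≤ (1/2:ℝ)^n := pow_le_pow_left₀ (by positivity) hhalf n
    · rw [Set.indicator_of_notMem hn]
      exact zero_le
  calc ∑' n, s.indicator (⇑(ProbabilityTheory.poissonPMF r)) n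
      ≤ ∑' n, ENNReal.ofReal (g n) := ENNReal.tsum_le_tsum hpt
    _ = ENNReal.ofReal (∑' n, g n) := (ENNReal.ofReal_tsum_of_nonneg hg_nonneg hg_summable).symm
    _ ≤ ENNReal.ofReal (2 * Real.exp (-(Real.log 2) * x)) := by
        apply ENNReal.ofReal_le_ofReal
        set k := ⌈x⌉₊ with hk
        have hgzero : ∀ i < k, g i = 0 := by
          intro i hi
          simp only [hg]
          rw [if_neg]
          rw [not_le]
          exact_mod_cast (Nat.lt_ceil.mp hi)
        have hsplit : ∑' n, g n = ∑' j, g (j + k) := by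
          rw [← Summable.sum_add_tsum_nat_add k hg_summable, Finset.sum_eq_zero (fun i hi => hgzero i (Finset.mem_range.mp hi)), zero_add]
        rw [hsplit]
        have hbound : ∑' j, g (j + k) ≤ ∑' j : ℕ, (1/2:ℝ)^(j+k) := by
          apply Summable.tsum_le_tsum (fun j => hg_le (j+k))
          · exact (hg_summable.comp_injective (add_left_injective k))
          · exact ((summable_geometric_of_lt_one (by norm_num : (0:ℝ) ≤ 1/2) (by norm_num)).comp_injective (add_left_injective k))
        have hgeom : ∑' j : ℕ, (1/2:ℝ)^(j+k) = (1/2:ℝ)^k * 2 := by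
          simp_rw [pow_add]
          rw [tsum_mul_right, tsum_geometric_of_lt_one (by norm_num) (by norm_num)]
          norm_num [mul_comm]
        have hfinal : (1/2:ℝ)^k * 2 ≤ 2 * Real.exp (-(Real.log 2) * x) := by
          have h1 : (1/2:ℝ)^k = Real.exp (-(Real.log 2) * k) := by
            rw [← Real.rpow_natCast (1/2:ℝ) k, Real.rpow_def_of_pos (by norm_num)]
            congr 1
            rw [one_div, Real.log_inv]
          rw [h1, mul_comm]
          have : -(Real.log 2) * (k:ℝ) ≤ -(Real.log 2) * x := by
            have hlog : (0:ℝ) < Real.log 2 := Real.log_pos (by norm_num)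
            have : x ≤ (k:ℝ) := Nat.le_ceil x
            nlinarith
          exact mul_le_mul_of_nonneg_left (Real.exp_le_exp.mpr this) (by norm_num)
        linarith [hbound, hgeom.le, hfinal, hgeom]

lemma expMeasure_tail (lam : ℝ) (hlam : 0 < lam) (t : ℝ) (ht : 0 ≤ t) :
    ProbabilityTheory.expMeasure lam {x : ℝ | t ≤ x} = ENNReal.ofReal (Real.exp (-(lam * t))) := by
  have hiic : ProbabilityTheory.expMeasure lam (Set.Iic t)
      = ENNReal.ofReal (1 - Real.exp (-(lam * t))) := by
    rw [ProbabilityTheory.expMeasure, ProbabilityTheory.gammaMeasure,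
      withDensity_apply _ measurableSet_Iic]
    have hpdf : ProbabilityTheory.gammaPDF 1 lam = ProbabilityTheory.exponentialPDF lam := rfl
    rw [hpdf, ProbabilityTheory.lintegral_exponentialPDF_eq_antiDeriv hlam t, if_pos ht]
  have hsingleton : ProbabilityTheory.expMeasure lam {t} = 0 := by
    rw [ProbabilityTheory.expMeasure, ProbabilityTheory.gammaMeasure,
      withDensity_apply _ (measurableSet_singleton t)]
    rw [show (volume.restrict {t}) = 0 by
      rw [Measure.restrict_eq_zero]; exact Real.volume_singleton]
    simp
  have : IsProbabilityMeasure (ProbabilityTheory.expMeasure lam) :=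
    ProbabilityTheory.isProbabilityMeasure_expMeasure hlam
  have hsplit : {x : ℝ | t ≤ x} = Set.Ici t := rfl
  have hIoi : ProbabilityTheory.expMeasure lam (Set.Ioi t)
      = ENNReal.ofReal (Real.exp (-(lam * t))) := by
    have hcompl : Set.Ioi t = (Set.Iic t)ᶜ := Set.compl_Iic.symm
    rw [hcompl, prob_compl_eq_one_sub measurableSet_Iic, hiic]
    have he1 : Real.exp (-(lam * t)) ≤ 1 := by
      rw [Real.exp_le_one_iff]
      nlinarith
    rw [← ENNReal.ofReal_one, ← ENNReal.ofReal_sub _ (by nlinarith [Real.exp_pos (-(lam*t))])]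
    congr 1
    ring
  rw [hsplit, ← Set.Ioi_union_left, measure_union _ (measurableSet_singleton t), hsingleton,
    add_zero, hIoi]
  · simp

set_option linter.unusedVariables false in
set_option maxHeartbeats 2000000 in
/-- bound (A.12)–(A.13) of the paper: for a Poisson process `P` with rate
`μ > 0` and an independent exponential time `S` with rate `λ > 0`, the quantity
`P(S)(1 + Θ S)` has a stretched-exponential tail. -/
theorem poisson_at_exponential_time_tail_bound
    {Ω : Type*} [MeasurableSpace Ω] (ℙ : Measure Ω) [IsProbabilityMeasure ℙ]
    (P : ℝ → Ω → ℕ) (μ : ℝ) (hμ : 0 < μ) (hP : IsPoissonProcess ℙ P μ)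
    (Θ : ℝ) (hΘ : 0 < Θ)
    (lam : ℝ) (hlam : 0 < lam)
    (S : Ω → ℝ) (hS_meas : Measurable S)
    (hS_exp : Measure.map S ℙ = ProbabilityTheory.expMeasure lam)
    (hS_indep : ProbabilityTheory.IndepFun S (fun ω => fun t : ℝ => P t ω) ℙ) :
    ∃ c₀ > (0 : ℝ), ∃ c₁ > (0 : ℝ), ∃ C₀ > (0 : ℝ), ∀ C, C₀ ≤ C →
      ℙ {ω | C / 2 ≤ (P (S ω) ω : ℝ) * (1 + Θ * S ω)}
        ≤ ENNReal.ofReal (c₀ * (1 + Real.sqrt C) * Real.exp (-c₁ * Real.sqrt C)) := by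
  obtain ⟨hPmeas, hP0, hPmono, -, hPdist⟩ := hP
  set b : ℝ := 1 / (2 * (1 + Θ)) with hb
  have hΘ1 : (0:ℝ) < 1 + Θ := by linarith
  have hbpos : 0 < b := by positivity
  have hbmul : b * (2 * (1 + Θ)) = 1 := by
    rw [hb]; field_simp
  have hb1 : b ≤ 1 := by nlinarith
  set ε : ℝ := min 1 (b / (2 * Real.exp 1 * μ)) with hε
  have hεpos : 0 < ε := by
    apply lt_min one_pos
    have : (0:ℝ) < 2 * Real.exp 1 * μ := by positivity
    positivity
  have hε1 : ε ≤ 1 := min_le_left _ _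
  have hεb : 2 * Real.exp 1 * μ * ε ≤ b := by
    have h2 : ε ≤ b / (2 * Real.exp 1 * μ) := min_le_right _ _
    have h3 : (0:ℝ) < 2 * Real.exp 1 * μ := by positivity
    rw [le_div_iff₀ h3] at h2
    linarith
  set c₁ : ℝ := min (lam * ε) (Real.log 2 * b) with hc₁
  have hc₁pos : 0 < c₁ :=
    lt_min (mul_pos hlam hεpos) (mul_pos (Real.log_pos one_lt_two) hbpos)
  refine ⟨3, by norm_num, c₁, hc₁pos, b⁻¹ ^ 2, by positivity, ?_⟩
  intro C hC
  have hC0 : (0:ℝ) ≤ C := le_trans (by positivity) hC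
  set R : ℝ := Real.sqrt C with hR
  have hR0 : 0 ≤ R := Real.sqrt_nonneg C
  have hRbinv : b⁻¹ ≤ R := by
    rw [hR, show b⁻¹ = Real.sqrt (b⁻¹^2) by
      rw [Real.sqrt_sq (by positivity)]]
    exact Real.sqrt_le_sqrt hC
  have hbR : 1 ≤ b * R := by
    rw [← mul_inv_cancel₀ (ne_of_gt hbpos)]
    exact mul_le_mul_of_nonneg_left hRbinv hbpos.le
  have hR1 : 1 ≤ R := le_trans hbR (by nlinarith)
  have hC_eq : C = R^2 := (Real.sq_sqrt hC0).symm
  set T : ℝ := ε * R with hT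
  have hT0 : 0 ≤ T := by positivity
  -- S is a.s. nonnegative
  have hS0 : ∀ᵐ ω ∂ℙ, 0 ≤ S ω := by
    have hnull : ℙ (S ⁻¹' (Set.Iio 0)) = 0 := by
      rw [← Measure.map_apply hS_meas measurableSet_Iio, hS_exp,
        ProbabilityTheory.expMeasure, ProbabilityTheory.gammaMeasure,
        withDensity_apply _ measurableSet_Iio]
      exact ProbabilityTheory.lintegral_gammaPDF_of_nonpos le_rfl
    rw [ae_iff]
    convert hnull using 2
    ext ω
    simp [Set.mem_preimage, Set.mem_Iio, not_le]
  -- the two dominating events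
  set A : Set Ω := S ⁻¹' (Set.Ici T) with hA
  set B : Set Ω := {ω | b * R ≤ ((P T ω - P 0 ω : ℕ) : ℝ)} with hB
  have hsub : {ω | C / 2 ≤ (P (S ω) ω : ℝ) * (1 + Θ * S ω)} ≤ᵐ[ℙ] (A ∪ B : Set Ω) := by
    filter_upwards [hP0, hPmono, hS0] with ω h0 hmono hSnn hω
    by_cases hTS : T ≤ S ω
    · exact Or.inl hTS
    · right
      push_neg at hTS
      have hle : P (S ω) ω ≤ P T ω := hmono (S ω) T hSnn hTS.le
      have hle' : ((P (S ω) ω : ℝ)) ≤ P T ω := by exact_mod_cast hle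
      have hfac : 1 + Θ * S ω ≤ 1 + Θ * T := by nlinarith
      have hfacpos : 0 < 1 + Θ * S ω := by nlinarith
      have hkey : C / 2 ≤ (P T ω : ℝ) * (1 + Θ * T) := by
        have hN0 : (0:ℝ) ≤ (P (S ω) ω : ℝ) := by positivity
        calc C / 2 ≤ (P (S ω) ω : ℝ) * (1 + Θ * S ω) := hω
          _ ≤ (P T ω : ℝ) * (1 + Θ * T) := by nlinarith
      have hineq : b * R * (1 + Θ * T) ≤ C / 2 := by
        have hεR : ε * R ≤ R := by nlinarith
        have hbR0 : (0:ℝ) ≤ b * R := by positivity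
        have : b * R * (1 + Θ * (ε * R)) ≤ b * R * (1 + Θ * R) := by
          nlinarith [mul_nonneg (mul_nonneg hbR0 hΘ.le) (sub_nonneg.mpr hεR)]
        have h2 : b * R * (1 + Θ * R) ≤ b * (1 + Θ) * R^2 := by nlinarith
        have h3 : b * (1 + Θ) * R^2 = C / 2 := by
          rw [hC_eq]; nlinarith [hbmul]
        rw [hT]; linarith
      have hTpos : 0 < 1 + Θ * T := by positivity
      have hPT : b * R ≤ (P T ω : ℝ) := by
        by_contra hcon
        push_neg at hcon
        nlinarith
      show b * R ≤ ((P T ω - P 0 ω : ℕ) : ℝ)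
      rw [h0, Nat.sub_zero]
      exact hPT
  have hmeasB : Measurable (fun ω => P T ω - P 0 ω) := (hPmeas T).sub (hPmeas 0)
  have hPA : ℙ A ≤ ENNReal.ofReal (Real.exp (-c₁ * R)) := by
    have heq : ℙ A = ENNReal.ofReal (Real.exp (-(lam * T))) := by
      rw [hA, ← Measure.map_apply hS_meas measurableSet_Ici, hS_exp]
      rw [show Set.Ici T = {x : ℝ | T ≤ x} from rfl, expMeasure_tail lam hlam T hT0]
    rw [heq]
    apply ENNReal.ofReal_le_ofReal
    apply Real.exp_le_exp.mpr
    have h1 : c₁ ≤ lam * ε := min_le_left _ _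
    rw [hT]
    nlinarith
  have hPB : ℙ B ≤ ENNReal.ofReal (2 * Real.exp (-c₁ * R)) := by
    have hBpre : B = (fun ω => P T ω - P 0 ω) ⁻¹' {n : ℕ | b * R ≤ (n:ℝ)} := rfl
    rw [hBpre, ← Measure.map_apply hmeasB MeasurableSet.of_discrete,
      hPdist 0 T le_rfl hT0]
    have hcoe : ((Real.toNNReal (μ * (T - 0)) : ℝ≥0) : ℝ) = μ * T := by
      rw [Real.coe_toNNReal _ (by rw [sub_zero]; positivity)]
      ring
    calc ProbabilityTheory.poissonMeasure (Real.toNNReal (μ * (T - 0))) {n : ℕ | b * R ≤ (n:ℝ)}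
        ≤ ENNReal.ofReal (2 * Real.exp (-(Real.log 2) * (b * R))) := by
          apply poisson_tail_bound _ _ hbR
          rw [hcoe, hT]
          nlinarith
      _ ≤ ENNReal.ofReal (2 * Real.exp (-c₁ * R)) := by
          apply ENNReal.ofReal_le_ofReal
          have h1 : c₁ ≤ Real.log 2 * b := min_le_right _ _
          have := Real.exp_le_exp.mpr (show -(Real.log 2) * (b * R) ≤ -c₁ * R by nlinarith)
          linarith
  calc ℙ {ω | C / 2 ≤ (P (S ω) ω : ℝ) * (1 + Θ * S ω)} ≤ ℙ (A ∪ B) := measure_mono_ae hsub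
    _ ≤ ℙ A + ℙ B := measure_union_le A B
    _ ≤ ENNReal.ofReal (Real.exp (-c₁ * R)) + ENNReal.ofReal (2 * Real.exp (-c₁ * R)) :=
        add_le_add hPA hPB
    _ ≤ ENNReal.ofReal (3 * (1 + R) * Real.exp (-c₁ * R)) := by
        rw [← ENNReal.ofReal_add (by positivity) (by positivity)]
        apply ENNReal.ofReal_le_ofReal
        nlinarith [Real.exp_pos (-c₁ * R), hR0]
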